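/- Let $F = (f_{ij})$ be a matrix with $f_{ij} \geq 0$ for $i \neq j$, $f_{ii} = -\sum_{j\neq i} f_{ij}$, and suppose for each $i$ that $-f_{ii} \leq 4 (rh)^{-2}$ (as follows from Lemma on stencil bounds). Then for any $\nu, \Delta t > 0$ with $\Delta t \leq (rh)^2/(4\nu)$, the forward Euler matrix $C = I + \nu\Delta t\, F^\top$ satisfies $\|C\|_1 = 1$, i.e., $\|\Gamma^{n+1}\|_{\ell^1} \leq \|\Gamma^n\|_{\ell^1}$ for every $\Gamma^n \in \mathbb{R}^N$. -/

import Mathlib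

open Finset

/-- Maximum absolute column sum norm of a matrix. -/
noncomputable def colNorm {N : ℕ} [NeZero N] (C : Matrix (Fin N) (Fin N) ℝ) : ℝ :=
  Finset.univ.sup' Finset.univ_nonempty (fun j => ∑ i, |C i j|)

/-- Under the a-priori time-step bound `Δt ≤ (rh)²/(4ν)` the
forward Euler matrix `C = I + νΔt Fᵀ` of a nonnegative stencil with zero row
sums and `-f_ii ≤ 4(rh)⁻²` satisfies `‖C‖₁ = 1`; in particular the scheme is
an `ℓ¹`-contraction. -/
theorem stmt_3 {N : ℕ} [NeZero N] (f : Matrix (Fin N) (Fin N) ℝ)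
    (r h ν Δt : ℝ) (hr : 0 < r) (hh : 0 < h) (hν : 0 < ν) (hΔt : 0 < Δt)
    (hnonneg : ∀ i j, i ≠ j → 0 ≤ f i j)
    (hrow : ∀ i, f i i = -∑ j ∈ Finset.univ.erase i, f i j)
    (hdiag : ∀ i, -f i i ≤ 4 / (r * h)^2)
    (hstep : Δt ≤ (r * h)^2 / (4 * ν)) :
    colNorm (1 + (ν * Δt) • f.transpose) = 1 ∧
    ∀ Γ : Fin N → ℝ,
      ∑ i, |(1 + (ν * Δt) • f.transpose).mulVec Γ i| ≤ ∑ i, |Γ i| := by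
  set c := ν * Δt with hc
  have hcpos : 0 < c := mul_pos hν hΔt
  have hrh : (0:ℝ) < (r * h)^2 := by positivity
  have h1 : c ≤ (r * h)^2 / 4 := by
    rw [hc, le_div_iff₀ (by norm_num : (0:ℝ) < 4)]
    have h2 := (le_div_iff₀ (by positivity : (0:ℝ) < 4 * ν)).mp hstep
    nlinarith
  have hckey : ∀ j, c * (-f j j) ≤ 1 := by
    intro j
    rcases le_or_gt (-f j j) 0 with hle | hlt
    · nlinarith
    · calc c * (-f j j) ≤ (r * h)^2 / 4 * (4 / (r * h)^2) :=
            mul_le_mul h1 (hdiag j) hlt.le (by positivity)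
        _ = 1 := by field_simp
  have hentry : ∀ i j, (1 + c • f.transpose) i j
      = (if i = j then (1:ℝ) else 0) + c * f j i := by
    intro i j
    simp [Matrix.add_apply, Matrix.one_apply, Matrix.smul_apply, Matrix.transpose_apply]
  have hcol : ∀ j, ∑ i, |(1 + c • f.transpose) i j| = 1 := by
    intro j
    rw [← Finset.add_sum_erase _ _ (Finset.mem_univ j)]
    have h1' : |(1 + c • f.transpose) j j| = 1 + c * f j j := by
      rw [hentry, if_pos rfl, abs_of_nonneg (by nlinarith [hckey j])]
    have h2' : ∀ i ∈ univ.erase j, |(1 + c • f.transpose) i j| = c * f j i := by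
      intro i hi
      have hij : i ≠ j := Finset.ne_of_mem_erase hi
      rw [hentry, if_neg hij, zero_add,
        abs_of_nonneg (mul_nonneg hcpos.le (hnonneg j i hij.symm))]
    rw [h1', Finset.sum_congr rfl h2', ← Finset.mul_sum, hrow j]
    ring
  constructor
  · refine le_antisymm (Finset.sup'_le _ _ fun j _ => (hcol j).le) ?_
    have := Finset.le_sup' (f := fun j => ∑ i, |(1 + c • f.transpose) i j|)
      (Finset.mem_univ (0 : Fin N))
    rw [hcol 0] at this
    exact this
  · intro Γ
    calc ∑ i, |(1 + c • f.transpose).mulVec Γ i|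
        ≤ ∑ i, ∑ j, |(1 + c • f.transpose) i j * Γ j| := by
          refine Finset.sum_le_sum fun i _ => ?_
          simp only [Matrix.mulVec, dotProduct]
          exact Finset.abs_sum_le_sum_abs _ _
      _ = ∑ j, (∑ i, |(1 + c • f.transpose) i j|) * |Γ j| := by
          rw [Finset.sum_comm]
          simp only [abs_mul, Finset.sum_mul]
      _ = ∑ j, |Γ j| := by
          exact Finset.sum_congr rfl fun j _ => by rw [hcol j, one_mul]
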